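/- Let G be a finite graph with e non-loop edges and degrees d_1 ≥ d_2 ≥ … ≥ d_v listed in decreasing order (loops not counted), and let 0 < M < k. Then ∑_i d_i·1[d_i > k√e] ≤ (1/(1 − M/k))·∑_{i > M√e} d_i, i.e., the total degree of vertices of degree exceeding k√e is at most 1/(1−M/k) times the total degree of all but the M√e highest-degree vertices. -/

import Mathlib

open Filter Finset
open scoped Classical ENNReal

/-- A finite graph on vertex set `Fin n`, possibly with loops, without multiple edges. -/
structure FinGraph where
  n : ℕ
  adj : Fin n → Fin n → Bool
  symm : ∀ i j, adj i j = adj j i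

namespace FinGraph

/-- Number of vertices. -/
def v (G : FinGraph) : ℕ := G.n

/-- Number of non-loop edges. -/
def e (G : FinGraph) : ℕ :=
  ((univ : Finset (Fin G.n × Fin G.n)).filter
    (fun q => G.adj q.1 q.2 = true ∧ q.1 < q.2)).card

/-- Number of loops. -/
def loops (G : FinGraph) : ℕ :=
  ((univ : Finset (Fin G.n)).filter (fun i => G.adj i i = true)).card

/-- Degree of a vertex (number of neighbours via non-loop edges). -/
def deg (G : FinGraph) (i : Fin G.n) : ℕ :=
  ((univ : Finset (Fin G.n)).filter (fun j => G.adj i j = true ∧ j ≠ i)).card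

/-- A graph is loopless when no vertex is adjacent to itself. -/
def Loopless (G : FinGraph) : Prop := ∀ i, G.adj i i = false

/-- The induced subgraph on a set `S` of vertices. -/
def induce (G : FinGraph) (S : Finset (Fin G.n)) : FinGraph where
  n := S.card
  adj i j := G.adj (S.orderIsoOfFin rfl i).1 (S.orderIsoOfFin rfl j).1
  symm i j := G.symm _ _

/-- The graph obtained by discarding all isolated vertices (vertices in no edge,
loop or non-loop). -/
def core (G : FinGraph) : FinGraph :=
  G.induce ((univ : Finset (Fin G.n)).filter (fun i => ∃ j, G.adj i j = true))

/-- Graph isomorphism. -/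
def Iso (G H : FinGraph) : Prop :=
  ∃ eqv : Fin G.n ≃ Fin H.n, ∀ i j, G.adj i j = H.adj (eqv i) (eqv j)

/-- Average degree `d̄(G)`. -/
noncomputable def avgDeg (G : FinGraph) : ℝ :=
  (1 / (G.n : ℝ)) * ∑ i : Fin G.n, (G.deg i : ℝ)

/-- Square average degree `d²̄(G)`. -/
noncomputable def sqAvgDeg (G : FinGraph) : ℝ :=
  (1 / (G.n : ℝ)) * ∑ i : Fin G.n, (G.deg i : ℝ) ^ 2

/-- Edge density `ρ(G) = 2e(G)/v(G)²`. -/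
noncomputable def density (G : FinGraph) : ℝ :=
  2 * (G.e : ℝ) / (G.n : ℝ) ^ 2

end FinGraph

/-- Unlabeled finite graphs: isomorphism classes of finite graphs. -/
def UGraph := Quot FinGraph.Iso

/-- The isomorphism class of a finite graph. -/
def FinGraph.cls (G : FinGraph) : UGraph := Quot.mk _ G

/-- Probability that independent Bernoulli(min p 1) vertex selection picks exactly `S`. -/
noncomputable def sampleWeight (G : FinGraph) (p : ℝ) (S : Finset (Fin G.n)) : ℝ :=
  (min p 1) ^ S.card * (1 - min p 1) ^ (G.n - S.card)

/-- Law (pmf) of the `p`-sampling `S_p(G)`: keep each vertex independently with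
probability `min p 1`, take the induced subgraph, discard isolated vertices,
and pass to the isomorphism class. -/
noncomputable def pSampleLaw (G : FinGraph) (p : ℝ) : UGraph → ℝ := fun H =>
  ∑ S ∈ (univ : Finset (Fin G.n)).powerset,
    sampleWeight G p S * (if ((G.induce S).core).cls = H then 1 else 0)

/-- The graph on `Fin k` pulled back along a vertex sample `x`. -/
def seqGraph (G : FinGraph) (k : ℕ) (x : Fin k → Fin G.n) : FinGraph where
  n := k
  adj i j := G.adj (x i) (x j)
  symm i j := G.symm _ _

/-- Law (pmf) of the with-replacement `p`-sampling `S̃_p(G)`: draw `K ~ Poisson(p·v(G))`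
vertices uniformly with replacement, form the graph on `Fin K` in which `i, j` are joined
whenever `(x_i, x_j)` is an edge of `G`, discard isolated vertices, and pass to the
isomorphism class. -/
noncomputable def wrSampleLaw (G : FinGraph) (p : ℝ) : UGraph → ℝ := fun H =>
  ∑' k : ℕ,
    (Real.exp (-(p * (G.v : ℝ))) * (p * (G.v : ℝ)) ^ k / (Nat.factorial k : ℝ)) *
      ((((univ : Finset (Fin k → Fin G.n)).filter
          (fun x => ((seqGraph G k x).core).cls = H)).card : ℝ) / ((G.v : ℝ)) ^ k)

/-- Total variation distance `sup_A |P(A) − Q(A)|` between two pmf-style laws on a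
countable discrete space. -/
noncomputable def dTV {α : Type*} (f g : α → ℝ) : ℝ :=
  ⨆ A : Set α, |∑' x : A, (f x.1 - g x.1)|

/-- `∑_i d_i · 1[d_i > k·√(e(G))]`, the total degree of vertices of degree exceeding
`k·√(e(G))`. -/
noncomputable def tailDegSum (G : FinGraph) (k : ℝ) : ℝ :=
  ∑ i : Fin G.n,
    (if k * Real.sqrt (G.e : ℝ) < (G.deg i : ℝ) then (G.deg i : ℝ) else 0)

/-- A sequence of graphs is uniformly sampling regular. -/
def UniformlySamplingRegular (G : ℕ → FinGraph) : Prop :=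
  ∀ ε : ℝ, 0 < ε → ∃ k : ℝ, 0 < k ∧ ∀ j,
    (1 / ((G j).e : ℝ)) * tailDegSum (G j) k < ε

/-- `E[e(S_p(G)) · 1[e(S_p(G)) > M]]`, the tail expectation of the number of non-loop
edges of the `p`-sampled subgraph (discarding isolated vertices does not change it). -/
noncomputable def expEdgeTail (G : FinGraph) (p M : ℝ) : ℝ :=
  ∑ S ∈ (univ : Finset (Fin G.n)).powerset,
    sampleWeight G p S *
      (if M < ((G.induce S).e : ℝ) then ((G.induce S).e : ℝ) else 0)

/-- `E[e(S_p(G))]`, the expected number of non-loop edges of the `p`-sampled subgraph. -/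
noncomputable def expEdge (G : FinGraph) (p : ℝ) : ℝ :=
  ∑ S ∈ (univ : Finset (Fin G.n)).powerset,
    sampleWeight G p S * ((G.induce S).e : ℝ)

/-- Law (pmf on ℕ) of the number of non-loop edges of the `p`-sampled subgraph. -/
noncomputable def edgeLaw (G : FinGraph) (p : ℝ) (m : ℕ) : ℝ :=
  ∑ S ∈ (univ : Finset (Fin G.n)).powerset,
    sampleWeight G p S * (if (G.induce S).e = m then 1 else 0)

/-- Number of kept neighbours (via non-loop edges) of vertex `i` under the selection `S`. -/
def keptNbrCount (G : FinGraph) (S : Finset (Fin G.n)) (i : Fin G.n) : ℕ :=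
  ((univ : Finset (Fin G.n)).filter (fun j => G.adj i j = true ∧ j ≠ i ∧ j ∈ S)).card

/-- `Pr(D_i ≥ 2)`: the probability that vertex `i` is kept and has at least two kept
neighbours, under independent Bernoulli(min p 1) vertex selection. -/
noncomputable def probD2 (G : FinGraph) (p : ℝ) (i : Fin G.n) : ℝ :=
  ∑ S ∈ (univ : Finset (Fin G.n)).powerset,
    sampleWeight G p S * (if i ∈ S ∧ 2 ≤ keptNbrCount G S i then 1 else 0)

/-- Probability that some kept vertex has at least two kept neighbours. -/
noncomputable def probSomeD2 (G : FinGraph) (p : ℝ) : ℝ :=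
  ∑ S ∈ (univ : Finset (Fin G.n)).powerset,
    sampleWeight G p S * (if ∃ i ∈ S, 2 ≤ keptNbrCount G S i then 1 else 0)

/-- Number of isolated kept (non-loop) edges: both endpoints kept, and each endpoint has
exactly one kept neighbour. -/
def isoEdgeCount (G : FinGraph) (S : Finset (Fin G.n)) : ℕ :=
  ((univ : Finset (Fin G.n × Fin G.n)).filter (fun q =>
    G.adj q.1 q.2 = true ∧ q.1 < q.2 ∧ q.1 ∈ S ∧ q.2 ∈ S ∧
    keptNbrCount G S q.1 = 1 ∧ keptNbrCount G S q.2 = 1)).card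

/-- Let `G` have `e` non-loop edges and degrees listed in decreasing
order via an enumeration `σ` (so `i ↦ deg(σ i)` is antitone), and let `0 < M < k`. Then
the total degree of vertices of degree exceeding `k√e` is at most `1/(1 − M/k)` times the
total degree of all but the `M√e` highest-degree vertices. -/
theorem stmt2 (G : FinGraph) (M k : ℝ) (hM : 0 < M) (hMk : M < k)
    (σ : Fin G.n ≃ Fin G.n) (hσ : Antitone fun i => G.deg (σ i)) :
    tailDegSum G k ≤
      (1 / (1 - M / k)) *
        ∑ i ∈ (univ : Finset (Fin G.n)).filter
            (fun i => M * Real.sqrt (G.e : ℝ) < (i.1 : ℝ) + 1),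
          (G.deg (σ i) : ℝ) := by
  set s := Real.sqrt (G.e : ℝ) with hsdef
  have hs0 : 0 ≤ s := Real.sqrt_nonneg _
  have hk : 0 < k := hM.trans hMk
  set T : Finset (Fin G.n) := univ.filter (fun i => k * s < (G.deg i : ℝ)) with hT
  set Q : Finset (Fin G.n) := univ.filter (fun i => ¬ (M * s < (i.1 : ℝ) + 1)) with hQ
  set NE : Finset (Fin G.n) := univ.filter (fun j => M * s < (((σ.symm j) : Fin G.n).1 : ℝ) + 1) with hNE
  have hS : tailDegSum G k = ∑ i ∈ T, (G.deg i : ℝ) := by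
    rw [tailDegSum, Finset.sum_filter]
  have hR : (∑ i ∈ (univ : Finset (Fin G.n)).filter
        (fun i => M * s < (i.1 : ℝ) + 1), (G.deg (σ i) : ℝ))
      = ∑ j ∈ NE, (G.deg j : ℝ) := by
    refine Finset.sum_equiv σ (fun i => ?_) (fun i _ => rfl)
    simp [hNE]
  -- excluded set has Q.card elements
  have hExcl : (univ.filter (fun j => j ∉ NE)).card = Q.card := by
    refine Finset.card_equiv σ.symm (fun j => ?_)
    simp [hNE, hQ]
  -- step 1
  have h1 : ∀ i, G.deg i ≤
      (univ.filter (fun j => (G.adj i j = true ∧ j ≠ i) ∧ j ∈ NE)).card + Q.card := by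
    intro i
    have hsub : univ.filter (fun j => G.adj i j = true ∧ j ≠ i) ⊆
        (univ.filter (fun j => (G.adj i j = true ∧ j ≠ i) ∧ j ∈ NE)) ∪
          (univ.filter (fun j => j ∉ NE)) := by
      intro j hj
      simp only [Finset.mem_filter, Finset.mem_union, Finset.mem_univ, true_and] at *
      by_cases h : j ∈ NE
      · exact Or.inl ⟨hj, h⟩
      · exact Or.inr h
    calc G.deg i ≤ _ := Finset.card_le_card hsub
      _ ≤ _ + _ := Finset.card_union_le _ _
      _ = _ := by rw [hExcl]
  -- helper
  have haux : ∀ (c : Fin G.n → Prop) (B : Finset (Fin G.n)),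
      (univ.filter (fun j => c j ∧ j ∈ B)).card = ∑ j ∈ B, (if c j then 1 else 0) := by
    intro c B
    rw [show univ.filter (fun j => c j ∧ j ∈ B) = B.filter c by ext j; simp [and_comm]]
    rw [Finset.card_filter]
  -- step 2 : double count
  have h2 : ∑ i ∈ T, (univ.filter (fun j => (G.adj i j = true ∧ j ≠ i) ∧ j ∈ NE)).card
      = ∑ j ∈ NE, (univ.filter (fun i => (G.adj j i = true ∧ i ≠ j) ∧ i ∈ T)).card := by
    calc ∑ i ∈ T, (univ.filter (fun j => (G.adj i j = true ∧ j ≠ i) ∧ j ∈ NE)).card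
        = ∑ i ∈ T, ∑ j ∈ NE, (if G.adj i j = true ∧ j ≠ i then 1 else 0) := by
          refine Finset.sum_congr rfl fun i _ => ?_
          rw [show univ.filter (fun j => (G.adj i j = true ∧ j ≠ i) ∧ j ∈ NE)
              = NE.filter (fun j => G.adj i j = true ∧ j ≠ i) from by ext j; simp [and_comm],
            Finset.card_filter]
      _ = ∑ j ∈ NE, ∑ i ∈ T, (if G.adj i j = true ∧ j ≠ i then 1 else 0) := Finset.sum_comm
      _ = ∑ j ∈ NE, ∑ i ∈ T, (if G.adj j i = true ∧ i ≠ j then 1 else 0) := by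
          exact Finset.sum_congr rfl fun j _ => Finset.sum_congr rfl fun i _ =>
            if_congr (and_congr (by rw [G.symm]) ne_comm) rfl rfl
      _ = ∑ j ∈ NE, (univ.filter (fun i => (G.adj j i = true ∧ i ≠ j) ∧ i ∈ T)).card := by
          refine Finset.sum_congr rfl fun j _ => ?_
          rw [show univ.filter (fun i => (G.adj j i = true ∧ i ≠ j) ∧ i ∈ T)
              = T.filter (fun i => G.adj j i = true ∧ i ≠ j) from by ext i; simp [and_comm],
            Finset.card_filter]
  -- step 3
  have h3 : ∀ j, (univ.filter (fun i => (G.adj j i = true ∧ i ≠ j) ∧ i ∈ T)).card ≤ G.deg j := by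
    intro j
    apply Finset.card_le_card
    intro i hi
    simp only [Finset.mem_filter, Finset.mem_univ, true_and] at *
    exact hi.1
  have key : ∑ i ∈ T, G.deg i ≤ T.card * Q.card + ∑ j ∈ NE, G.deg j := by
    calc ∑ i ∈ T, G.deg i
        ≤ ∑ i ∈ T, ((univ.filter (fun j => (G.adj i j = true ∧ j ≠ i) ∧ j ∈ NE)).card + Q.card) :=
          Finset.sum_le_sum (fun i _ => h1 i)
      _ = (∑ i ∈ T, (univ.filter (fun j => (G.adj i j = true ∧ j ≠ i) ∧ j ∈ NE)).card)
            + T.card * Q.card := by rw [Finset.sum_add_distrib, Finset.sum_const, smul_eq_mul]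
      _ = (∑ j ∈ NE, (univ.filter (fun i => (G.adj j i = true ∧ i ≠ j) ∧ i ∈ T)).card)
            + T.card * Q.card := by rw [h2]
      _ ≤ (∑ j ∈ NE, G.deg j) + T.card * Q.card :=
          add_le_add (Finset.sum_le_sum (fun j _ => h3 j)) le_rfl
      _ = _ := by ring
  -- cast
  set S := ∑ i ∈ T, (G.deg i : ℝ) with hSdef
  set R := ∑ j ∈ NE, (G.deg j : ℝ) with hRdef
  have keyR : S ≤ (T.card : ℝ) * (Q.card : ℝ) + R := by
    have := key
    have : ((∑ i ∈ T, G.deg i : ℕ) : ℝ) ≤ ((T.card * Q.card + ∑ j ∈ NE, G.deg j : ℕ) : ℝ) := by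
      exact_mod_cast this
    push_cast at this
    simpa [hSdef, hRdef] using this
  have hB : (T.card : ℝ) * (k * s) ≤ S := by
    have := Finset.card_nsmul_le_sum T (fun i => (G.deg i : ℝ)) (k * s)
      (fun i hi => le_of_lt (by simpa [hT] using (Finset.mem_filter.mp hi).2))
    simpa [nsmul_eq_mul] using this
  have hC : (Q.card : ℝ) ≤ M * s := by
    have hcard : Q.card ≤ Nat.floor (M * s) := by
      have := Finset.card_le_card_of_injOn (s := Q) (t := Finset.range (Nat.floor (M * s)))
        (fun (i : Fin G.n) => i.1) ?maps ?inj
      · simpa using this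
      case maps =>
        intro i hi
        simp only [hQ, Finset.mem_filter, Finset.mem_univ, true_and, not_lt] at hi
        have : (i.1 : ℕ) + 1 ≤ Nat.floor (M * s) := by
          apply Nat.le_floor
          push_cast
          exact (Finset.mem_filter.mp (Finset.mem_coe.mp hi)).2
        exact Finset.mem_range.mpr this
      case inj => exact fun a _ b _ h => Fin.val_injective h
    calc (Q.card : ℝ) ≤ (Nat.floor (M * s) : ℝ) := by exact_mod_cast hcard
      _ ≤ M * s := Nat.floor_le (by positivity)
  -- final algebra
  have ham : (T.card : ℝ) * (Q.card : ℝ) ≤ (M / k) * S := by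
    calc (T.card : ℝ) * (Q.card : ℝ) ≤ (T.card : ℝ) * (M * s) := by
          apply mul_le_mul_of_nonneg_left hC (by positivity)
      _ = (M / k) * ((T.card : ℝ) * (k * s)) := by field_simp
      _ ≤ (M / k) * S := mul_le_mul_of_nonneg_left hB (by positivity)
  have hfrac : 0 < 1 - M / k := by
    have : M / k < 1 := (div_lt_one hk).mpr hMk
    linarith
  have hfin : (1 - M / k) * S ≤ R := by nlinarith [keyR, ham]
  rw [hS, hR]
  rw [div_mul_eq_mul_div, one_mul, le_div_iff₀ hfrac]
  linarith [hfin]
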